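/- Given a contraction (φ, ψ, h) of commutative dg algebras from (A, d_A) onto (B, d_B) in which ψ is an algebra morphism, the four identities h((−1)^{|a|+1}h(a)b + a h(b)) = h(a)h(b), h(a ψ(x)) = h(a)ψ(x), φ((−1)^{|a|+1}h(a)b + a h(b)) = 0, φ(a ψ(x)) = φ(a)x (for all homogeneous a,b ∈ A, x,y ∈ B) are equivalent to Real's conditions: h(h(a)h(b)) = 0, h(h(a)ψ(x)) = 0, φ(h(a)h(b)) = 0, φ(h(a)ψ(x)) = 0. -/

import Mathlib

/-- **Equivalence of the semifull-contraction identities with Real's conditions.**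
Given a contraction `(φ, ψ, h)` of graded commutative dg algebras from
`(A, d_A)` onto `(B, d_B)` in which `ψ` is an algebra morphism, the four
identities
`h((−1)^{|a|+1} h(a)b + a h(b)) = h(a)h(b)`,
`h(a ψ(x)) = h(a) ψ(x)`,
`φ((−1)^{|a|+1} h(a)b + a h(b)) = 0`,
`φ(a ψ(x)) = φ(a) x`
are equivalent to Real's conditions
`h(h(a)h(b)) = 0`, `h(h(a)ψ(x)) = 0`, `φ(h(a)h(b)) = 0`, `φ(h(a)ψ(x)) = 0`. -/
theorem statement_12 {A B : Type*} [CommRing A] [CommRing B]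
    [Algebra ℝ A] [Algebra ℝ B]
    (𝒜 : ℤ → Submodule ℝ A) (ℬ : ℤ → Submodule ℝ B)
    (dA : A →ₗ[ℝ] A) (dB : B →ₗ[ℝ] B)
    (φ : A →ₗ[ℝ] B) (ψ : B →ₗ[ℝ] A) (h : A →ₗ[ℝ] A)
    -- gradings
    (h𝒜top : (⨆ i, 𝒜 i) = ⊤) (hℬtop : (⨆ i, ℬ i) = ⊤)
    (h𝒜mul : ∀ i j, ∀ a ∈ 𝒜 i, ∀ b ∈ 𝒜 j, a * b ∈ 𝒜 (i + j))
    (hℬmul : ∀ i j, ∀ x ∈ ℬ i, ∀ y ∈ ℬ j, x * y ∈ ℬ (i + j))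
    (h𝒜comm : ∀ i j, ∀ a ∈ 𝒜 i, ∀ b ∈ 𝒜 j,
      a * b = (Int.negOnePow (i * j) : ℤ) • (b * a))
    -- degrees of the structure maps
    (hdAdeg : ∀ i, ∀ a ∈ 𝒜 i, dA a ∈ 𝒜 (i + 1))
    (hdBdeg : ∀ i, ∀ x ∈ ℬ i, dB x ∈ ℬ (i + 1))
    (hhdeg : ∀ i, ∀ a ∈ 𝒜 i, h a ∈ 𝒜 (i - 1))
    (hφdeg : ∀ i, ∀ a ∈ 𝒜 i, φ a ∈ ℬ i)
    (hψdeg : ∀ i, ∀ x ∈ ℬ i, ψ x ∈ 𝒜 i)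
    -- dg algebra structure
    (hdA2 : dA.comp dA = 0) (hdB2 : dB.comp dB = 0)
    (hLeibnizA : ∀ i, ∀ a ∈ 𝒜 i, ∀ b : A,
      dA (a * b) = dA a * b + (Int.negOnePow i : ℤ) • (a * dA b))
    (hLeibnizB : ∀ i, ∀ x ∈ ℬ i, ∀ y : B,
      dB (x * y) = dB x * y + (Int.negOnePow i : ℤ) • (x * dB y))
    -- contraction data
    (hφchain : φ.comp dA = dB.comp φ) (hψchain : ψ.comp dB = dA.comp ψ)
    (hφψ : φ.comp ψ = LinearMap.id)
    (hhomotopy : h.comp dA + dA.comp h = ψ.comp φ - LinearMap.id)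
    (hφh : φ.comp h = 0) (hhψ : h.comp ψ = 0) (hh2 : h.comp h = 0)
    -- ψ is an algebra morphism
    (hψmul : ∀ x y : B, ψ (x * y) = ψ x * ψ y) :
    ((∀ i, ∀ a ∈ 𝒜 i, ∀ b : A,
        h ((Int.negOnePow (i + 1) : ℤ) • (h a * b) + a * h b) = h a * h b) ∧
     (∀ (a : A) (x : B), h (a * ψ x) = h a * ψ x) ∧
     (∀ i, ∀ a ∈ 𝒜 i, ∀ b : A,
        φ ((Int.negOnePow (i + 1) : ℤ) • (h a * b) + a * h b) = 0) ∧
     (∀ (a : A) (x : B), φ (a * ψ x) = φ a * x))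
    ↔
    ((∀ a b : A, h (h a * h b) = 0) ∧
     (∀ (a : A) (x : B), h (h a * ψ x) = 0) ∧
     (∀ a b : A, φ (h a * h b) = 0) ∧
     (∀ (a : A) (x : B), φ (h a * ψ x) = 0)) := by
  -- pointwise versions of the hypotheses
  have Hφd : ∀ a, φ (dA a) = dB (φ a) := fun a => LinearMap.congr_fun hφchain a
  have Hψd : ∀ x, ψ (dB x) = dA (ψ x) := fun x => LinearMap.congr_fun hψchain x
  have Hφψ : ∀ x, φ (ψ x) = x := fun x => LinearMap.congr_fun hφψ x
  have Hhom : ∀ a, h (dA a) + dA (h a) = ψ (φ a) - a := fun a => by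
    simpa using LinearMap.congr_fun hhomotopy a
  have Hφh : ∀ a, φ (h a) = 0 := fun a => by
    simpa using LinearMap.congr_fun hφh a
  have Hhψ : ∀ x, h (ψ x) = 0 := fun x => by
    simpa using LinearMap.congr_fun hhψ x
  have Hh2 : ∀ a, h (h a) = 0 := fun a => by
    simpa using LinearMap.congr_fun hh2 a
  -- induction over the grading
  have gradA : ∀ (P : A → Prop), P 0 → (∀ x y, P x → P y → P (x + y)) →
      (∀ i, ∀ a ∈ 𝒜 i, P a) → ∀ a, P a := by
    intro P h0 hadd hgr a
    have ha : a ∈ ⨆ i, 𝒜 i := by rw [h𝒜top]; trivial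
    exact Submodule.iSup_induction 𝒜 (motive := P) ha hgr h0 hadd
  -- sign bookkeeping
  have hsb : ∀ n : ℤ, Int.negOnePow (n - 1) = Int.negOnePow (n + 1) := by
    intro n
    rw [show n + 1 = (n - 1) + 2 by ring, Int.negOnePow_add,
      Int.negOnePow_even 2 (by norm_num), mul_one]
  have sqA : ∀ n : ℤ, ((Int.negOnePow n : ℤ) : A) * ((Int.negOnePow n : ℤ) : A) = 1 := by
    intro n
    rcases Int.units_eq_one_or n.negOnePow with hn | hn <;> rw [hn] <;> norm_num
  have hInt : ∀ (n : ℤ) (v : A), h (((n : ℤ) : A) * v) = ((n : ℤ) : A) * h v := by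
    intro n v
    rw [← zsmul_eq_mul, map_zsmul, zsmul_eq_mul]
  have φInt : ∀ (n : ℤ) (v : A), φ (((n : ℤ) : A) * v) = ((n : ℤ) : B) * φ v := by
    intro n v
    rw [← zsmul_eq_mul, map_zsmul, zsmul_eq_mul]
  have HdAh : ∀ c, h (dA c) = ψ (φ c) - c - dA (h c) := fun c => by
    linear_combination Hhom c
  have HdAha : ∀ c, dA (h c) = ψ (φ c) - c - h (dA c) := fun c => by
    linear_combination Hhom c
  have K : ∀ c, φ c = 0 → h c = 0 → h (dA c) = -c := by
    intro c h1 h2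
    rw [HdAh, h1, h2]
    simp
  constructor
  · rintro ⟨H1, H2, H3, H4⟩
    refine ⟨?_, fun a x => by rw [H2 (h a) x, Hh2, zero_mul], ?_,
      fun a x => by rw [H4 (h a) x, Hφh, zero_mul]⟩
    · intro a b
      refine gradA (fun a => h (h a * h b) = 0) (by simp) ?_ ?_ a
      · intro x y hx hy
        rw [map_add, add_mul, map_add, hx, hy, add_zero]
      · intro i a ha
        have h1 := H1 i a ha (h b)
        rw [Hh2 b] at h1
        simp only [mul_zero, add_zero, map_zsmul] at h1
        rcases Int.units_eq_one_or (Int.negOnePow (i + 1)) with hε | hε <;>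
          rw [hε] at h1 <;> simpa using h1
    · intro a b
      refine gradA (fun a => φ (h a * h b) = 0) (by simp) ?_ ?_ a
      · intro x y hx hy
        rw [map_add, add_mul, map_add, hx, hy, add_zero]
      · intro i a ha
        have h1 := H3 i a ha (h b)
        rw [Hh2 b] at h1
        simp only [mul_zero, add_zero, map_zsmul] at h1
        rcases Int.units_eq_one_or (Int.negOnePow (i + 1)) with hε | hε <;>
          rw [hε] at h1 <;> simpa using h1
  · rintro ⟨R1, R2, R3, R4⟩
    -- identity (2), first for graded a
    have key2 : ∀ i, ∀ a ∈ 𝒜 i, ∀ x : B, h (a * ψ x) = h a * ψ x := by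
      intro i a ha x
      have hu : h a ∈ 𝒜 (i - 1) := hhdeg i a ha
      have hL := hLeibnizA (i - 1) (h a) hu (ψ x)
      simp only [zsmul_eq_mul] at hL
      have e0 : h (dA (h a * ψ x)) = -(h a * ψ x) := K _ (R4 a x) (R2 a x)
      have e2 : h (h a * dA (ψ x)) = 0 := by rw [← Hψd]; exact R2 a (dB x)
      have e3 : h (dA (h a) * ψ x) = -(h a * ψ x) := by
        have h4 := congrArg h hL
        rw [map_add, hInt, e0, e2, mul_zero, add_zero] at h4
        exact h4.symm
      have hdec : a * ψ x = ψ (φ a) * ψ x - h (dA a) * ψ x - dA (h a) * ψ x := by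
        linear_combination (ψ x) * Hhom a
      rw [hdec, map_sub, map_sub, ← hψmul, Hhψ, R2 (dA a) x, e3]
      ring
    have key2' : ∀ (a : A) (x : B), h (a * ψ x) = h a * ψ x := by
      intro a
      refine gradA (fun a => ∀ x, h (a * ψ x) = h a * ψ x) (by simp) ?_ key2 a
      intro u v hu hv x
      rw [map_add, add_mul, map_add, hu x, hv x, add_mul]
    -- identity (4), first for graded a
    have key4 : ∀ i, ∀ a ∈ 𝒜 i, ∀ x : B, φ (a * ψ x) = φ a * x := by
      intro i a ha x
      have hu : h a ∈ 𝒜 (i - 1) := hhdeg i a ha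
      have hL := hLeibnizA (i - 1) (h a) hu (ψ x)
      simp only [zsmul_eq_mul] at hL
      have e0 : φ (dA (h a * ψ x)) = 0 := by rw [Hφd, R4 a x, map_zero]
      have e2 : φ (h a * dA (ψ x)) = 0 := by rw [← Hψd]; exact R4 a (dB x)
      have e3 : φ (dA (h a) * ψ x) = 0 := by
        have h4 := congrArg φ hL
        rw [map_add, φInt, e0, e2, mul_zero, add_zero] at h4
        exact h4.symm
      have hdec : a * ψ x = ψ (φ a) * ψ x - h (dA a) * ψ x - dA (h a) * ψ x := by
        linear_combination (ψ x) * Hhom a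
      rw [hdec, map_sub, map_sub, ← hψmul, Hφψ, R4 (dA a) x, e3]
      ring
    have key4' : ∀ (a : A) (x : B), φ (a * ψ x) = φ a * x := by
      intro a
      refine gradA (fun a => ∀ x, φ (a * ψ x) = φ a * x) (by simp) ?_ key4 a
      intro u v hu hv x
      rw [map_add, add_mul, map_add, hu x, hv x, add_mul]
    refine ⟨?_, key2', ?_, key4'⟩
    · -- identity (1)
      intro i a ha
      have hu : h a ∈ 𝒜 (i - 1) := hhdeg i a ha
      have hψφa : ψ (φ a) ∈ 𝒜 i := hψdeg i (φ a) (hφdeg i a ha)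
      refine gradA (fun b =>
        h ((Int.negOnePow (i + 1) : ℤ) • (h a * b) + a * h b) = h a * h b) (by simp) ?_ ?_
      · intro u v hu' hv'
        simp only [zsmul_eq_mul] at hu' hv' ⊢
        have e : ((Int.negOnePow (i + 1) : ℤ) : A) * (h a * (u + v)) + a * h (u + v) =
            (((Int.negOnePow (i + 1) : ℤ) : A) * (h a * u) + a * h u) +
            (((Int.negOnePow (i + 1) : ℤ) : A) * (h a * v) + a * h v) := by
          rw [map_add]; ring
        rw [e, map_add, hu', hv', map_add, mul_add]
      · intro j b hb
        simp only [zsmul_eq_mul]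
        set c : A := ((Int.negOnePow (i + 1) : ℤ) : A) with hc
        have hv : h b ∈ 𝒜 (j - 1) := hhdeg j b hb
        have hdhb : h (dA (h b)) = -(h b) := by
          rw [HdAh, Hφh, Hh2, map_zero, map_zero]
          ring
        have hcomm := h𝒜comm i (j - 1) (ψ (φ a)) hψφa (h b) hv
        simp only [zsmul_eq_mul] at hcomm
        have hψφahb : h (ψ (φ a) * h b) = 0 := by
          rw [hcomm, hInt, R2 b (φ a), mul_zero]
        have hdahb : h (dA (h a) * h b) = -(h (a * h b)) := by
          have e : dA (h a) * h b = ψ (φ a) * h b - a * h b - h (dA a) * h b := by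
            rw [HdAha]; ring
          rw [e, map_sub, map_sub, hψφahb, R1 (dA a) b]
          ring
        have hL := hLeibnizA (i - 1) (h a) hu (h b)
        rw [hsb i] at hL
        simp only [zsmul_eq_mul] at hL
        have hmain : c * h (h a * dA (h b)) = h (a * h b) - h a * h b := by
          have h4 := congrArg h hL
          rw [map_add, hInt, hdahb, K _ (R3 a b) (R1 a b)] at h4
          linear_combination -h4
        have hdecb : b = ψ (φ b) - h (dA b) - dA (h b) := by
          linear_combination Hhom b
        have hb' : h b = h (ψ (φ b)) - h (h (dA b)) - h (dA (h b)) := by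
          conv_lhs => rw [hdecb]
          rw [map_sub, map_sub]
        have hadd1 : h (c * (h a * b) + a * h b) =
            h (c * (h a * ψ (φ b)) + a * h (ψ (φ b))) -
            h (c * (h a * h (dA b)) + a * h (h (dA b))) -
            h (c * (h a * dA (h b)) + a * h (dA (h b))) := by
          rw [← map_sub, ← map_sub]
          congr 1
          linear_combination c * h a * hdecb + a * hb'
        have G1 : h (c * (h a * ψ (φ b)) + a * h (ψ (φ b))) = h a * h (ψ (φ b)) := by
          rw [Hhψ, mul_zero, mul_zero, add_zero, hInt, R2 a (φ b), mul_zero]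
        have G2 : h (c * (h a * h (dA b)) + a * h (h (dA b))) = h a * h (h (dA b)) := by
          rw [Hh2, mul_zero, mul_zero, add_zero, hInt, R1 a (dA b), mul_zero]
        have G3 : h (c * (h a * dA (h b)) + a * h (dA (h b))) = h a * h (dA (h b)) := by
          rw [hdhb]
          have e : c * (h a * dA (h b)) + a * -h b = c * (h a * dA (h b)) + -(a * h b) := by
            ring
          rw [e, map_add, map_neg, hInt]
          linear_combination hmain
        rw [hadd1, G1, G2, G3]
        linear_combination (-(h a)) * hb'
    · -- identity (3)
      intro i a ha
      have hu : h a ∈ 𝒜 (i - 1) := hhdeg i a ha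
      have hψφa : ψ (φ a) ∈ 𝒜 i := hψdeg i (φ a) (hφdeg i a ha)
      refine gradA (fun b =>
        φ ((Int.negOnePow (i + 1) : ℤ) • (h a * b) + a * h b) = 0) (by simp) ?_ ?_
      · intro u v hu' hv'
        simp only [zsmul_eq_mul] at hu' hv' ⊢
        have e : ((Int.negOnePow (i + 1) : ℤ) : A) * (h a * (u + v)) + a * h (u + v) =
            (((Int.negOnePow (i + 1) : ℤ) : A) * (h a * u) + a * h u) +
            (((Int.negOnePow (i + 1) : ℤ) : A) * (h a * v) + a * h v) := by
          rw [map_add]; ring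
        rw [e, map_add, hu', hv', add_zero]
      · intro j b hb
        simp only [zsmul_eq_mul]
        set c : A := ((Int.negOnePow (i + 1) : ℤ) : A) with hc
        have hv : h b ∈ 𝒜 (j - 1) := hhdeg j b hb
        have hdhb : h (dA (h b)) = -(h b) := by
          rw [HdAh, Hφh, Hh2, map_zero, map_zero]
          ring
        have hcomm := h𝒜comm i (j - 1) (ψ (φ a)) hψφa (h b) hv
        simp only [zsmul_eq_mul] at hcomm
        have hψφahb : φ (ψ (φ a) * h b) = 0 := by
          rw [hcomm, φInt, R4 b (φ a), mul_zero]
        have hdahb : φ (dA (h a) * h b) = -(φ (a * h b)) := by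
          have e : dA (h a) * h b = ψ (φ a) * h b - a * h b - h (dA a) * h b := by
            rw [HdAha]; ring
          rw [e, map_sub, map_sub, hψφahb, R3 (dA a) b]
          ring
        have hL := hLeibnizA (i - 1) (h a) hu (h b)
        rw [hsb i] at hL
        simp only [zsmul_eq_mul] at hL
        have hφdhab : φ (dA (h a * h b)) = 0 := by
          rw [Hφd, R3 a b, map_zero]
        have hmain : ((Int.negOnePow (i + 1) : ℤ) : B) * φ (h a * dA (h b)) =
            φ (a * h b) := by
          have h4 := congrArg φ hL
          rw [map_add, φInt, hdahb, hφdhab] at h4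
          linear_combination -h4
        have hdecb : b = ψ (φ b) - h (dA b) - dA (h b) := by
          linear_combination Hhom b
        have hb' : h b = h (ψ (φ b)) - h (h (dA b)) - h (dA (h b)) := by
          conv_lhs => rw [hdecb]
          rw [map_sub, map_sub]
        have hadd1 : φ (c * (h a * b) + a * h b) =
            φ (c * (h a * ψ (φ b)) + a * h (ψ (φ b))) -
            φ (c * (h a * h (dA b)) + a * h (h (dA b))) -
            φ (c * (h a * dA (h b)) + a * h (dA (h b))) := by
          rw [← map_sub, ← map_sub]
          congr 1
          linear_combination c * h a * hdecb + a * hb'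
        have G1 : φ (c * (h a * ψ (φ b)) + a * h (ψ (φ b))) = 0 := by
          rw [Hhψ, mul_zero, add_zero, φInt, R4 a (φ b), mul_zero]
        have G2 : φ (c * (h a * h (dA b)) + a * h (h (dA b))) = 0 := by
          rw [Hh2, mul_zero, add_zero, φInt, R3 a (dA b), mul_zero]
        have G3 : φ (c * (h a * dA (h b)) + a * h (dA (h b))) = 0 := by
          rw [hdhb]
          have e : c * (h a * dA (h b)) + a * -h b = c * (h a * dA (h b)) + -(a * h b) := by
            ring
          rw [e, map_add, map_neg, φInt]
          linear_combination hmain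
        rw [hadd1, G1, G2, G3]
        ring
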